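/- Given a sequence s = c₁, …, c_n of crossing sections where c_i is an a_i-crossing section, c₁ is initial, c_n is accepting, and each consecutive pair (c_i, c_{i+1}) is in the matching relation M, there exists an accepting two-way run ρ over the word a₁…a_n whose crossing section sequence is exactly s; moreover V(ρ) = Σᵢ V(c_i). -/

import Mathlib

/-- Two-way finite automaton; `Sum.inr false` is the left delimiter ⊢,
`Sum.inr true` is the right delimiter ⊣. -/
structure TwoWayFA (σ : Type) (Q : Type) where
  /-- reading direction of each state: `true` = right-reading -/
  isRight : Q → Bool
  init : Set Q
  acc : Set Q
  trans : Q → (σ ⊕ Bool) → Q → Prop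

namespace TwoWayFA

variable {σ Q : Type}

/-- The letter of ⊢w⊣ at index `i` (0-based). -/
def readAt (w : List σ) (i : ℕ) : Option (σ ⊕ Bool) :=
  if i = 0 then some (Sum.inr false)
  else if i = w.length + 1 then some (Sum.inr true)
  else (w[i - 1]?).map Sum.inl

/-- Index of the letter read from configuration `c = (state, head position)`,
where the head position counts the letters of ⊢w⊣ to the left of the head. -/
def readIdx (A : TwoWayFA σ Q) (c : Q × ℕ) : ℕ :=
  if A.isRight c.1 then c.2 else c.2 - 1

def step (A : TwoWayFA σ Q) (w : List σ) (c c' : Q × ℕ) : Prop :=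
  ∃ a, readAt w (A.readIdx c) = some a ∧ A.trans c.1 a c'.1 ∧
    (if A.isRight c.1 then c'.2 = c.2 + 1 else c.2 ≠ 0 ∧ c'.2 = c.2 - 1)

def IsRun (A : TwoWayFA σ Q) (w : List σ) (ρ : List (Q × ℕ)) : Prop :=
  ρ ≠ [] ∧ ρ.Chain' (A.step w)

/-- An accepting run starts at the left end of ⊢w⊣ in an initial state and
halts past the right delimiter in an accepting state. -/
def IsAccRun (A : TwoWayFA σ Q) (w : List σ) (ρ : List (Q × ℕ)) : Prop :=
  A.IsRun w ρ ∧ (∃ q ∈ A.init, ρ.head? = some (q, 0)) ∧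
    (∃ q ∈ A.acc, ρ.getLast? = some (q, w.length + 2))

def lang (A : TwoWayFA σ Q) : Set (List σ) := {w | ∃ ρ, A.IsAccRun w ρ}

def Deterministic (A : TwoWayFA σ Q) : Prop :=
  A.init.Subsingleton ∧ ∀ q a q₁ q₂, A.trans q a q₁ → A.trans q a q₂ → q₁ = q₂

def OneWay (A : TwoWayFA σ Q) : Prop := ∀ q, A.isRight q = true

def Unambiguous (A : TwoWayFA σ Q) : Prop :=
  ∀ w ρ₁ ρ₂, A.IsAccRun w ρ₁ → A.IsAccRun w ρ₂ → ρ₁ = ρ₂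

end TwoWayFA

/-- Number of visits of run `ρ` to input position `p`. -/
def visits {Q : Type} (ρ : List (Q × ℕ)) (p : ℕ) : ℕ :=
  (ρ.filter fun c => c.2 == p).length

/-- A run is `k`-visit if it visits every input position at most `k` times. -/
def KVisit {Q : Type} (k : ℕ) (ρ : List (Q × ℕ)) : Prop := ∀ p, visits ρ p ≤ k

/-- `A` is `k`-visit: every accepting run visits each position at most `k` times. -/
def TwoWayFA.IsKVisit {σ Q : Type} (A : TwoWayFA σ Q) (k : ℕ) : Prop :=
  ∀ w ρ, A.IsAccRun w ρ → KVisit k ρ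

/-- Weight of a step (a pair of consecutive configurations) of a Parikh automaton. -/
def stepWeight {σ Q : Type} (A : TwoWayFA σ Q) {d : ℕ}
    (lam : Q → (σ ⊕ Bool) → Q → (Fin d → ℤ)) (w : List σ)
    (cc : (Q × ℕ) × (Q × ℕ)) : Fin d → ℤ :=
  match TwoWayFA.readAt w (A.readIdx cc.1) with
  | some a => lam cc.1.1 a cc.2.1
  | none => 0

/-- Value of a run of a Parikh automaton: the sum of the weight vectors of its steps. -/
def runVal {σ Q : Type} (A : TwoWayFA σ Q) {d : ℕ}
    (lam : Q → (σ ⊕ Bool) → Q → (Fin d → ℤ)) (w : List σ) (ρ : List (Q × ℕ)) :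
    Fin d → ℤ :=
  ((ρ.zip ρ.tail).map (stepWeight A lam w)).sum

/-- Language of a two-way Parikh automaton `(A, lam, S)` with semi-linear constraint `S`. -/
def paLang {σ Q : Type} (A : TwoWayFA σ Q) {d : ℕ}
    (lam : Q → (σ ⊕ Bool) → Q → (Fin d → ℤ)) (S : Set (Fin d → ℤ)) : Set (List σ) :=
  {w | ∃ ρ, A.IsAccRun w ρ ∧ runVal A lam w ρ ∈ S}

/-- The word ⊢w⊣ over the extended alphabet. -/
def extWord {σ : Type} (w : List σ) : List (σ ⊕ Bool) :=
  Sum.inr false :: (w.map Sum.inl ++ [Sum.inr true])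

/-- An `a`-crossing section: a nonempty sequence of at most `k` transitions on the
letter `a`, whose first source and last target are right-reading and whose consecutive
sources alternate reading directions. -/
def IsCrossSection {σ Q : Type} (A : TwoWayFA σ Q) (k : ℕ) (a : σ ⊕ Bool)
    (c : List (Q × Q)) : Prop :=
  c ≠ [] ∧ c.length ≤ k ∧ (∀ t ∈ c, A.trans t.1 a t.2) ∧
    (∃ t, c.head? = some t ∧ A.isRight t.1 = true) ∧
    (∃ t, c.getLast? = some t ∧ A.isRight t.2 = true) ∧
    c.Chain' (fun t t' => A.isRight t.1 ≠ A.isRight t'.1)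

/-- The interleaved state sequence p₁ q₂ p₃ q₄ … (sources at even 0-based indices,
targets at odd indices). -/
def sSeqL {Q : Type} (c : List (Q × Q)) : List Q :=
  List.ofFn fun i : Fin c.length => if i.1 % 2 = 0 then (c.get i).1 else (c.get i).2

/-- The interleaved state sequence q₁ p₂ q₃ p₄ … (targets at even 0-based indices,
sources at odd indices). -/
def sSeqR {Q : Type} (c : List (Q × Q)) : List Q :=
  List.ofFn fun i : Fin c.length => if i.1 % 2 = 0 then (c.get i).2 else (c.get i).1

/-- Group a list into consecutive pairs (from the front) and delete every pair
satisfying `good`; a trailing unmatched element is kept. -/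
def chunkReduce {Q : Type} (good : Q → Q → Bool) : List Q → List Q
  | x :: y :: rest => (if good x y then [] else [x, y]) ++ chunkReduce good rest
  | l => l

/-- The L-anchorage of a crossing section. -/
def LAnch {σ Q : Type} [DecidableEq Q] (A : TwoWayFA σ Q) (c : List (Q × Q)) : List Q :=
  match sSeqL c with
  | [] => []
  | x :: rest => x :: chunkReduce (fun u v => decide (u = v) && A.isRight u) rest

/-- The R-anchorage of a crossing section. -/
def RAnch {σ Q : Type} [DecidableEq Q] (A : TwoWayFA σ Q) (c : List (Q × Q)) : List Q :=
  chunkReduce (fun u v => decide (u = v) && !A.isRight u) (sSeqR c)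

/-- A crossing section is initial if its L-anchorage is a single initial state. -/
def InitialCS {σ Q : Type} [DecidableEq Q] (A : TwoWayFA σ Q) (c : List (Q × Q)) : Prop :=
  ∃ q ∈ A.init, LAnch A c = [q]

/-- A crossing section is accepting if its R-anchorage is a single accepting state. -/
def AcceptingCS {σ Q : Type} [DecidableEq Q] (A : TwoWayFA σ Q) (c : List (Q × Q)) : Prop :=
  ∃ q ∈ A.acc, RAnch A c = [q]

/-- The matching relation: the R-anchorage of `c₁` equals the L-anchorage of `c₂`. -/
def MatchCS {σ Q : Type} [DecidableEq Q] (A : TwoWayFA σ Q)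
    (c₁ c₂ : List (Q × Q)) : Prop :=
  RAnch A c₁ = LAnch A c₂

/-- The crossing section of a run at letter index `i`: the transitions of the run
reading the `i`-th letter of ⊢w⊣, in order of appearance. -/
def sectionAt {σ Q : Type} (A : TwoWayFA σ Q) (w : List σ) (ρ : List (Q × ℕ)) (i : ℕ) :
    List (Q × Q) :=
  (ρ.zip ρ.tail).filterMap fun cc =>
    if A.readIdx cc.1 = i then some (cc.1.1, cc.2.1) else none

/-- The crossing section sequence of a run, over all letters of ⊢w⊣. -/
def crossSeq {σ Q : Type} (A : TwoWayFA σ Q) (w : List σ) (ρ : List (Q × ℕ)) :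
    List (List (Q × Q)) :=
  (List.range (w.length + 2)).map (sectionAt A w ρ)

/-- The value of an `a`-crossing section: the sum of the weights of its transitions. -/
def secVal {σ Q : Type} {d : ℕ} (lam : Q → (σ ⊕ Bool) → Q → (Fin d → ℤ)) (a : σ ⊕ Bool)
    (c : List (Q × Q)) : Fin d → ℤ :=
  (c.map fun t => lam t.1 a t.2).sum

set_option linter.unusedSectionVars false
set_option linter.unusedVariables false
set_option maxHeartbeats 1000000

section Aux
variable {σ Q : Type} [DecidableEq Q]

/-! ### chunkReduce lemmas -/

lemma chunk_ind {Q : Type} (P : List Q → Prop) (h0 : P []) (h1 : ∀ x, P [x])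
    (h2 : ∀ x y rest, P rest → P (x :: y :: rest)) : ∀ l, P l := by
  have key : ∀ N (l : List Q), l.length ≤ N → P l := by
    intro N
    induction N with
    | zero => intro l h; cases l with
      | nil => exact h0
      | cons x l' => simp at h
    | succ N ih =>
      intro l h
      cases l with
      | nil => exact h0
      | cons x l' =>
        cases l' with
        | nil => exact h1 x
        | cons y rest =>
          exact h2 x y rest (ih rest (by simp at h; omega))
  exact fun l => key l.length l le_rfl

variable (g : Q → Q → Bool)

lemma chunkReduce_nil : chunkReduce g [] = [] := rfl
lemma chunkReduce_single (x : Q) : chunkReduce g [x] = [x] := rfl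
lemma chunkReduce_cons2 (x y : Q) (rest : List Q) :
    chunkReduce g (x :: y :: rest) = (if g x y then [] else [x, y]) ++ chunkReduce g rest := rfl

lemma chunkReduce_drop (x y : Q) (rest : List Q) (h : g x y = true) :
    chunkReduce g (x :: y :: rest) = chunkReduce g rest := by
  rw [chunkReduce_cons2, h]; rfl

lemma chunkReduce_keep2 (x y : Q) (rest : List Q) (h : g x y = false) :
    chunkReduce g (x :: y :: rest) = x :: y :: chunkReduce g rest := by
  rw [chunkReduce_cons2, h]; rfl

lemma chunkReduce_length_parity (l : List Q) :
    (chunkReduce g l).length % 2 = l.length % 2 := by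
  induction l using chunk_ind with
  | h0 => rfl
  | h1 x => rfl
  | h2 x y rest ih =>
    rw [chunkReduce_cons2]
    by_cases h : g x y = true <;> simp [h, List.length_append] <;> omega

/-- Parity-indexed predicate preservation through `chunkReduce`. -/
lemma chunkReduce_EO (P Q' : Q → Prop) (l : List Q)
    (h : ∀ (k : ℕ) (x : Q), l[k]? = some x → if k % 2 = 0 then P x else Q' x) :
    ∀ (k : ℕ) (x : Q), (chunkReduce g l)[k]? = some x →
      if k % 2 = 0 then P x else Q' x := by
  induction l using chunk_ind with
  | h0 => intro k x hx; simp [chunkReduce_nil] at hx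
  | h1 x' => intro k x hx; exact h k x hx
  | h2 x' y rest ih =>
    have hrest : ∀ (k : ℕ) (x : Q), rest[k]? = some x → if k % 2 = 0 then P x else Q' x := by
      intro k x hx
      have := h (k + 2) x (by simpa using hx)
      rcases Nat.even_or_odd k with he | he
      · have h0 : k % 2 = 0 := Nat.even_iff.mp he
        have h1 : (k + 2) % 2 = 0 := by omega
        simp only [h0, h1, if_true] at this ⊢; exact this
      · have h0 : k % 2 = 1 := Nat.odd_iff.mp he
        have h1 : (k + 2) % 2 = 1 := by omega
        simp only [h0, h1] at this ⊢; exact this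
    intro k x hx
    by_cases hg : g x' y = true
    · rw [chunkReduce_drop g x' y rest hg] at hx; exact ih hrest k x hx
    · rw [chunkReduce_keep2 g x' y rest (by simpa using hg)] at hx
      match k with
      | 0 =>
        simp only [List.getElem?_cons_zero, Option.some.injEq] at hx
        subst hx; simpa using h 0 x' (by simp)
      | 1 =>
        simp only [List.getElem?_cons_succ, List.getElem?_cons_zero, Option.some.injEq] at hx
        subst hx; simpa using h 1 y (by simp)
      | (k + 2) =>
        have hx' : (chunkReduce g rest)[k]? = some x := by simpa using hx
        have := ih hrest k x hx'
        rcases Nat.even_or_odd k with he | he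
        · have h0 : k % 2 = 0 := Nat.even_iff.mp he
          have h1 : (k + 2) % 2 = 0 := by omega
          simp only [h0, h1, if_true] at this ⊢; exact this
        · have h0 : k % 2 = 1 := Nat.odd_iff.mp he
          have h1 : (k + 2) % 2 = 1 := by omega
          simp only [h0, h1] at this ⊢; exact this

/-- A kept pair survives into the output of `chunkReduce` at an even position. -/
lemma chunkReduce_keep (l : List Q) (m : ℕ) (u v : Q)
    (hu : l[2 * m]? = some u) (hv : l[2 * m + 1]? = some v)
    (hg : g u v = false) :
    ∃ (k : ℕ), k % 2 = 0 ∧ (chunkReduce g l)[k]? = some u ∧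
      (chunkReduce g l)[k + 1]? = some v := by
  induction l using chunk_ind generalizing m with
  | h0 => simp at hu
  | h1 x =>
    exfalso
    match m with
    | 0 => simp at hv
    | (m+1) => rw [show 2*(m+1) = 2*m+1+1 by ring] at hu; simp at hu
  | h2 x y rest ih =>
    match m with
    | 0 =>
      simp at hu hv; subst hu; subst hv
      exact ⟨0, by simp, by rw [chunkReduce_keep2 g x y rest hg]; simp,
        by rw [chunkReduce_keep2 g x y rest hg]; simp⟩
    | (m + 1) =>
      have hu' : rest[2 * m]? = some u := by
        rw [show 2 * (m + 1) = 2 * m + 1 + 1 by ring] at hu; simpa using hu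
      have hv' : rest[2 * m + 1]? = some v := by
        rw [show 2 * (m + 1) + 1 = (2 * m + 1) + 1 + 1 by ring] at hv; simpa using hv
      obtain ⟨k, hke, hk1, hk2⟩ := ih m hu' hv'
      by_cases hxy : g x y = true
      · rw [chunkReduce_drop g x y rest hxy]
        exact ⟨k, hke, hk1, hk2⟩
      · rw [chunkReduce_keep2 g x y rest (by simpa using hxy)]
        exact ⟨k + 2, by omega, by simpa using hk1, by simpa using hk2⟩

/-! ### sSeq lemmas -/

lemma sSeqL_nil : sSeqL ([] : List (Q × Q)) = [] := rfl
lemma sSeqR_nil : sSeqR ([] : List (Q × Q)) = [] := rfl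

lemma sSeqL_cons (t : Q × Q) (cl : List (Q × Q)) : sSeqL (t :: cl) = t.1 :: sSeqR cl := by
  unfold sSeqL sSeqR
  rw [List.ofFn_succ]
  congr 1
  · congr 1
    funext i
    rcases Nat.even_or_odd i.1 with h | h
    · have h0 : i.1 % 2 = 0 := Nat.even_iff.mp h
      have h1 : (i.1 + 1) % 2 = 1 := by omega
      simp [Fin.succ, h0, h1]
    · have h0 : i.1 % 2 = 1 := Nat.odd_iff.mp h
      have h1 : (i.1 + 1) % 2 = 0 := by omega
      simp [Fin.succ, h0, h1]

lemma sSeqR_cons (t : Q × Q) (cl : List (Q × Q)) : sSeqR (t :: cl) = t.2 :: sSeqL cl := by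
  unfold sSeqL sSeqR
  rw [List.ofFn_succ]
  congr 1
  · congr 1
    funext i
    rcases Nat.even_or_odd i.1 with h | h
    · have h0 : i.1 % 2 = 0 := Nat.even_iff.mp h
      have h1 : (i.1 + 1) % 2 = 1 := by omega
      simp [Fin.succ, h0, h1]
    · have h0 : i.1 % 2 = 1 := Nat.odd_iff.mp h
      have h1 : (i.1 + 1) % 2 = 0 := by omega
      simp [Fin.succ, h0, h1]

lemma sSeqL_length (cl : List (Q × Q)) : (sSeqL cl).length = cl.length := by
  simp [sSeqL]

lemma sSeqR_length (cl : List (Q × Q)) : (sSeqR cl).length = cl.length := by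
  simp [sSeqR]

lemma sSeq_get? (cl : List (Q × Q)) (k : ℕ) :
    ((sSeqL cl)[k]? = Option.map (fun t => if k % 2 = 0 then t.1 else t.2) (cl[k]?)) ∧
    ((sSeqR cl)[k]? = Option.map (fun t => if k % 2 = 0 then t.2 else t.1) (cl[k]?)) := by
  induction cl generalizing k with
  | nil => simp [sSeqL_nil, sSeqR_nil]
  | cons t cl ih =>
    rw [sSeqL_cons, sSeqR_cons]
    match k with
    | 0 => simp
    | (k+1) =>
      simp only [List.getElem?_cons_succ]
      constructor
      · rw [(ih k).2]
        rcases Nat.even_or_odd k with h | h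
        · have h0 : k % 2 = 0 := Nat.even_iff.mp h
          have h1 : (k + 1) % 2 = 1 := by omega
          simp [h0, h1]
        · have h0 : k % 2 = 1 := Nat.odd_iff.mp h
          have h1 : (k + 1) % 2 = 0 := by omega
          simp [h0, h1]
      · rw [(ih k).1]
        rcases Nat.even_or_odd k with h | h
        · have h0 : k % 2 = 0 := Nat.even_iff.mp h
          have h1 : (k + 1) % 2 = 1 := by omega
          simp [h0, h1]
        · have h0 : k % 2 = 1 := Nat.odd_iff.mp h
          have h1 : (k + 1) % 2 = 0 := by omega
          simp [h0, h1]

lemma sSeqL_get? (cl : List (Q × Q)) (k : ℕ) :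
    (sSeqL cl)[k]? = Option.map (fun t => if k % 2 = 0 then t.1 else t.2) (cl[k]?) := (sSeq_get? cl k).1

lemma sSeqR_get? (cl : List (Q × Q)) (k : ℕ) :
    (sSeqR cl)[k]? = Option.map (fun t => if k % 2 = 0 then t.2 else t.1) (cl[k]?) := (sSeq_get? cl k).2

/-! ### Boundary words -/

variable {σ : Type}

def goodL (A : TwoWayFA σ Q) : Q → Q → Bool := fun u v => decide (u = v) && A.isRight u
def goodR (A : TwoWayFA σ Q) : Q → Q → Bool := fun u v => decide (u = v) && !A.isRight u

/-- The word of pending events at the left boundary of a section suffix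
(`β` = suffix starts with a right-reading source). -/
def lWord (A : TwoWayFA σ Q) : Bool → List (Q × Q) → List Q
  | true, [] => []
  | true, t :: cl => t.1 :: chunkReduce (goodL A) (sSeqR cl)
  | false, cl => chunkReduce (goodL A) (sSeqR cl)

/-- The word of pending events at the right boundary of a section suffix. -/
def rWord (A : TwoWayFA σ Q) : Bool → List (Q × Q) → List Q
  | true, cl => chunkReduce (goodR A) (sSeqR cl)
  | false, [] => []
  | false, t :: cl => t.1 :: chunkReduce (goodR A) (sSeqR cl)

variable {A : TwoWayFA σ Q}

lemma LAnch_eq_lWord (cl : List (Q × Q)) : LAnch A cl = lWord A true cl := by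
  cases cl with
  | nil => rfl
  | cons t cl => rw [LAnch, sSeqL_cons]; rfl

lemma RAnch_eq_rWord (cl : List (Q × Q)) : RAnch A cl = rWord A true cl := rfl

lemma lWord_true_nil : lWord A true ([] : List (Q × Q)) = [] := rfl
lemma rWord_false_nil : rWord A false ([] : List (Q × Q)) = [] := rfl
lemma lWord_false_nil : lWord A false ([] : List (Q × Q)) = [] := rfl
lemma lWord_false_eq (cl : List (Q × Q)) : lWord A false cl = chunkReduce (goodL A) (sSeqR cl) := by
  cases cl <;> rfl
lemma rWord_true_eq (cl : List (Q × Q)) : rWord A true cl = chunkReduce (goodR A) (sSeqR cl) := rfl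

/-- (L1) -/
lemma lWord_true_cons (t : Q × Q) (cl : List (Q × Q)) :
    lWord A true (t :: cl) = t.1 :: lWord A false cl := by
  rw [lWord_false_eq]; rfl

/-- (L2') -/
lemma rWord_false_cons (t : Q × Q) (cl : List (Q × Q)) :
    rWord A false (t :: cl) = t.1 :: rWord A true cl := by
  rw [rWord_true_eq]; rfl

/-- (R1) -/
lemma rWord_true_cons_of_right (t : Q × Q) (cl : List (Q × Q)) (h : A.isRight t.2 = true) :
    rWord A true (t :: cl) = t.2 :: rWord A false cl := by
  rw [rWord_true_eq, sSeqR_cons]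
  cases cl with
  | nil => rfl
  | cons t' cl' =>
    rw [sSeqL_cons, chunkReduce_keep2 _ _ _ _ (by simp [goodR, h]), rWord_false_cons, rWord_true_eq]

/-- (R2) -/
lemma rWord_false_eq_cons (t t' : Q × Q) (cl' : List (Q × Q)) (h : A.isRight t.2 = false)
    (he : t'.1 = t.2) :
    rWord A false (t' :: cl') = t.2 :: rWord A true (t :: t' :: cl') := by
  rw [rWord_false_cons, rWord_true_eq (t :: t' :: cl'), sSeqR_cons, sSeqL_cons,
    chunkReduce_drop _ _ _ _ (by simp [goodR, he, h]), he, rWord_true_eq]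

/-- (L4) -/
lemma lWord_false_cons_of_left (t : Q × Q) (cl : List (Q × Q)) (h : A.isRight t.2 = false) :
    lWord A false (t :: cl) = t.2 :: lWord A true cl := by
  rw [lWord_false_eq, sSeqR_cons]
  cases cl with
  | nil => rfl
  | cons t' cl' =>
    rw [sSeqL_cons, chunkReduce_keep2 _ _ _ _ (by simp [goodL, h]), lWord_true_cons, lWord_false_eq]

/-- (L5) -/
lemma lWord_true_eq_cons (t t' : Q × Q) (cl' : List (Q × Q)) (h : A.isRight t.2 = true)
    (he : t'.1 = t.2) :
    lWord A true (t' :: cl') = t.2 :: lWord A false (t :: t' :: cl') := by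
  rw [lWord_true_cons, lWord_false_eq (t :: t' :: cl'), sSeqR_cons, sSeqL_cons,
    chunkReduce_drop _ _ _ _ (by simp [goodL, he, h]), he, lWord_false_eq]

/-! ### Strong well-formedness of section suffixes -/

structure SWF (A : TwoWayFA σ Q) (aj : σ ⊕ Bool) (β : Bool) (cl : List (Q × Q)) : Prop where
  tr : ∀ t ∈ cl, A.trans t.1 aj t.2
  alt : ∀ (k : ℕ) (t : Q × Q), cl[k]? = some t → A.isRight t.1 = (β == decide (k % 2 = 0))
  lastR : ∀ h : cl ≠ [], A.isRight (cl.getLast h).1 = true ∧ A.isRight (cl.getLast h).2 = true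
  bounce : cl.Chain' (fun t t' => A.isRight t.2 ≠ A.isRight t.1 → t'.1 = t.2)

namespace SWF

variable {aj : σ ⊕ Bool} {β : Bool} {t t' : Q × Q} {cl : List (Q × Q)}

lemma head_alt (h : SWF A aj β (t :: cl)) : A.isRight t.1 = β := by
  have := h.alt 0 t (by simp)
  simpa using this

lemma tail (h : SWF A aj β (t :: cl)) : SWF A aj (!β) cl := by
  refine ⟨fun t' ht' => h.tr t' (by simp [ht']), ?_, ?_, h.bounce.tail⟩
  · intro k t' hk
    have := h.alt (k + 1) t' (by simpa using hk)
    rcases Nat.even_or_odd k with he | he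
    · have h0 : k % 2 = 0 := Nat.even_iff.mp he
      have h1 : (k + 1) % 2 = 1 := by omega
      rw [h0] at *
      rw [h1] at this
      cases β <;> simpa using this
    · have h0 : k % 2 = 1 := Nat.odd_iff.mp he
      have h1 : (k + 1) % 2 = 0 := by omega
      rw [h0] at *
      rw [h1] at this
      cases β <;> simpa using this
  · intro hne
    have hne' : (t :: cl) ≠ [] := by simp
    rw [← List.getLast_cons hne]
    exact h.lastR hne'

lemma length_parity (h : SWF A aj β cl) (hne : cl ≠ []) :
    cl.length % 2 = (if β then 1 else 0) := by
  have hlt : cl.length - 1 < cl.length := by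
    cases cl with | nil => simp at hne | cons a l => simp
  have hget : cl[cl.length - 1]? = some (cl.getLast hne) := by
    rw [List.getLast_eq_getElem]
    exact List.getElem?_eq_getElem hlt
  have halt := h.alt (cl.length - 1) _ hget
  have hlast := (h.lastR hne).1
  rw [hlast] at halt
  have hlen : 1 ≤ cl.length := by
    cases cl with | nil => simp at hne | cons a l => simp
  cases β with
  | true =>
    simp only [Bool.true_beq] at halt
    have : (cl.length - 1) % 2 = 0 := by
      by_contra hc
      rw [decide_eq_false hc] at halt
      simp at halt
    simp; omega
  | false =>
    simp only [Bool.false_beq] at halt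
    have : ¬((cl.length - 1) % 2 = 0) := by
      by_contra hc
      rw [decide_eq_true hc] at halt
      simp at halt
    simp; omega

end SWF

lemma rWord_true_length_parity (cl : List (Q × Q)) :
    (rWord A true cl).length % 2 = cl.length % 2 := by
  rw [rWord_true_eq]
  rw [chunkReduce_length_parity, sSeqR_length]

lemma lWord_true_length_parity (cl : List (Q × Q)) :
    (lWord A true cl).length % 2 = cl.length % 2 := by
  cases cl with
  | nil => rfl
  | cons t cl' =>
    rw [lWord_true_cons, lWord_false_eq]
    simp only [List.length_cons]
    have := chunkReduce_length_parity (goodL A) (sSeqR cl')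
    rw [sSeqR_length] at this
    omega

lemma lWord_true_ne {cl : List (Q × Q)} (hne : cl ≠ []) : lWord A true cl ≠ [] := by
  cases cl with
  | nil => simp at hne
  | cons t cl' => rw [lWord_true_cons]; simp

lemma rWord_ne {aj : σ ⊕ Bool} {β : Bool} {cl : List (Q × Q)}
    (h : SWF A aj β cl) (hne : cl ≠ []) : rWord A β cl ≠ [] := by
  cases β with
  | false =>
    cases cl with
    | nil => simp at hne
    | cons t cl' => rw [rWord_false_cons]; simp
  | true =>
    have h1 := rWord_true_length_parity (A := A) cl
    have h2 := h.length_parity hne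
    simp at h2
    intro hcon
    rw [hcon] at h1
    simp at h1
    omega

/-- Head of `rWord true` is right-reading (under SWF). -/
lemma rWord_true_head {aj : σ ⊕ Bool} :
    ∀ cl : List (Q × Q), SWF A aj true cl →
      ∀ x, (rWord A true cl).head? = some x → A.isRight x = true := by
  intro cl
  induction cl using chunk_ind with
  | h0 => intro _ x hx; simp [rWord_true_eq, sSeqR_nil, chunkReduce_nil] at hx
  | h1 t =>
    intro h x hx
    have hR : A.isRight t.2 = true := (h.lastR (by simp)).2
    rw [rWord_true_cons_of_right t [] hR] at hx
    simp at hx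
    rw [← hx]; exact hR
  | h2 t t' cl'' ih =>
    intro h x hx
    by_cases hR : A.isRight t.2 = true
    · rw [rWord_true_cons_of_right t _ hR] at hx
      simp at hx
      rw [← hx]; exact hR
    · have hR' : A.isRight t.2 = false := by simpa using hR
      have ht' : t'.1 = t.2 := by
        have hc := List.isChain_cons_cons.mp h.bounce
        exact hc.1 (by rw [hR', h.head_alt]; simp)
      have : rWord A true (t :: t' :: cl'') = rWord A true cl'' := by
        rw [rWord_true_eq, sSeqR_cons, sSeqL_cons,
          chunkReduce_drop _ _ _ _ (by simp [goodR, ht', hR']), rWord_true_eq]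
      rw [this] at hx
      have hswf : SWF A aj true cl'' := by
        have := h.tail.tail
        simpa using this
      exact ih hswf x hx

/-- Head of `lWord false` is left-reading (under SWF). -/
lemma lWord_false_head {aj : σ ⊕ Bool} :
    ∀ cl : List (Q × Q), SWF A aj false cl →
      ∀ x, (lWord A false cl).head? = some x → A.isRight x = false := by
  intro cl
  induction cl using chunk_ind with
  | h0 => intro _ x hx; simp [lWord_false_nil] at hx
  | h1 t =>
    intro h x hx
    exfalso
    have h1 := (h.lastR (by simp)).1
    have h2 := h.head_alt
    simp [List.getLast] at h1
    rw [h1] at h2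
    simp at h2
  | h2 t t' cl'' ih =>
    intro h x hx
    by_cases hR : A.isRight t.2 = true
    · have ht' : t'.1 = t.2 := by
        have hc := List.isChain_cons_cons.mp h.bounce
        exact hc.1 (by rw [hR, h.head_alt]; simp)
      have : lWord A false (t :: t' :: cl'') = lWord A false cl'' := by
        rw [lWord_false_eq, sSeqR_cons, sSeqL_cons,
          chunkReduce_drop _ _ _ _ (by simp [goodL, ht', hR]), lWord_false_eq]
      rw [this] at hx
      have hswf : SWF A aj false cl'' := by
        have := h.tail.tail
        simpa using this
      exact ih hswf x hx
    · have hR' : A.isRight t.2 = false := by simpa using hR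
      rw [lWord_false_cons_of_left t _ hR'] at hx
      simp at hx
      rw [← hx]; exact hR'

/-! ### Positional typing (for initialization) -/

/-- In `lWord true cl`, elements at even positions are right-reading. -/
lemma lWord_true_even (cl : List (Q × Q))
    (halt : ∀ (k : ℕ) (t : Q × Q), cl[k]? = some t →
      A.isRight t.1 = (true == decide (k % 2 = 0))) :
    ∀ (k : ℕ) (x : Q), (lWord A true cl)[k]? = some x → k % 2 = 0 → A.isRight x = true := by
  cases cl with
  | nil => intro k x hx; simp [lWord_true_nil] at hx
  | cons t cl' =>
    intro k x hx hk
    rw [lWord_true_cons, lWord_false_eq] at hx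
    match k with
    | 0 =>
      simp at hx
      rw [← hx]
      simpa using halt 0 t (by simp)
    | (k' + 1) =>
      have hk' : k' % 2 = 1 := by omega
      have hx' : (chunkReduce (goodL A) (sSeqR cl'))[k']? = some x := by simpa using hx
      have hEO := chunkReduce_EO (goodL A) (fun _ => True) (fun y => A.isRight y = true)
        (sSeqR cl') ?_ k' x hx'
      · rw [hk'] at hEO; simpa using hEO
      · intro j y hy
        rw [sSeqR_get?] at hy
        match hj : cl'[j]? with
        | none => rw [hj] at hy; simp at hy
        | some u =>
          rw [hj] at hy
          simp at hy
          rcases Nat.even_or_odd j with he | he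
          · have h0 : j % 2 = 0 := Nat.even_iff.mp he
            simp [h0]
          · have h0 : j % 2 = 1 := Nat.odd_iff.mp he
            simp only [h0]
            have := halt (j + 1) u (by simpa using hj)
            have h1 : (j + 1) % 2 = 0 := by omega
            rw [h1] at this
            simp at this ⊢
            rw [h0] at hy
            simp at hy
            rw [← hy]
            exact this

/-- In `rWord true cl`, elements at odd positions are left-reading. -/
lemma rWord_true_odd (cl : List (Q × Q))
    (halt : ∀ (k : ℕ) (t : Q × Q), cl[k]? = some t →
      A.isRight t.1 = (true == decide (k % 2 = 0))) :
    ∀ (k : ℕ) (x : Q), (rWord A true cl)[k]? = some x → k % 2 = 1 → A.isRight x = false := by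
  intro k x hx hk
  rw [rWord_true_eq] at hx
  have hEO := chunkReduce_EO (goodR A) (fun _ => True) (fun y => A.isRight y = false)
    (sSeqR cl) ?_ k x hx
  · rw [hk] at hEO; simpa using hEO
  · intro j y hy
    rw [sSeqR_get?] at hy
    match hj : cl[j]? with
    | none => rw [hj] at hy; simp at hy
    | some u =>
      rw [hj] at hy
      simp at hy
      rcases Nat.even_or_odd j with he | he
      · have h0 : j % 2 = 0 := Nat.even_iff.mp he
        simp [h0]
      · have h0 : j % 2 = 1 := Nat.odd_iff.mp he
        simp only [h0]
        have := halt j u hj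
        rw [h0] at hy
        simp at hy
        simp at this
        rw [← hy]
        simpa [h0] using this

/-! ### The weave -/

def aAt (w : List σ) (j : ℕ) : σ ⊕ Bool := (extWord w).getD j (Sum.inr true)

lemma readAt_lt (w : List σ) (i : ℕ) (h : i < w.length + 2) :
    TwoWayFA.readAt w i = some (aAt w i) := by
  rcases eq_or_ne i 0 with h0 | h0
  · subst h0; rfl
  rcases eq_or_ne i (w.length + 1) with h1 | h1
  · subst h1
    rw [TwoWayFA.readAt, if_neg h0, if_pos rfl, aAt, extWord]
    rw [List.getD_cons_succ]
    have : (w.map Sum.inl ++ [Sum.inr true]).getD w.length (Sum.inr true) = Sum.inr true := by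
      rw [List.getD_eq_getElem?_getD, List.getElem?_append_right (by simp)]
      simp
    rw [this]
  · have hi1 : i - 1 < w.length := by omega
    rw [TwoWayFA.readAt, if_neg h0, if_neg h1, aAt, extWord]
    have hig : i = (i - 1) + 1 := by omega
    rw [hig, List.getD_cons_succ]
    rw [List.getD_eq_getElem?_getD, List.getElem?_append, if_pos (by simpa using hi1)]
    rw [List.getElem?_map]
    simp [List.getElem?_eq_getElem hi1]

lemma readAt_ge (w : List σ) (i : ℕ) (h : w.length + 2 ≤ i) :
    TwoWayFA.readAt w i = none := by
  rw [TwoWayFA.readAt, if_neg (by omega), if_neg (by omega)]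
  rw [List.getElem?_eq_none (by omega)]
  rfl

variable (A) (w : List σ)

/-- Pending boundary word at boundary `b`, seen from the left. -/
def LVd (r : ℕ → List (Q × Q)) (β : ℕ → Bool) : ℕ → List Q
  | 0 => []
  | (b + 1) => rWord A (β b) (r b)

/-- Pending boundary word at boundary `b`, seen from the right. -/
def RVd (f : Q) (r : ℕ → List (Q × Q)) (β : ℕ → Bool) (b : ℕ) : List Q :=
  if b = w.length + 2 then [f] else lWord A (β b) (r b)

/-- The weave invariant. -/
def WInv (r : ℕ → List (Q × Q)) (β : ℕ → Bool) (q : Q) (i : ℕ) (f : Q) : Prop :=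
  i < w.length + 2 ∧ f ∈ A.acc ∧
  (∀ j, SWF A (aAt w j) (β j) (r j)) ∧
  (∀ j, w.length + 2 ≤ j → r j = []) ∧
  (∀ b, b ≤ w.length + 2 → b ≠ (if A.isRight q then i else i + 1) →
    LVd A r β b = RVd A w f r β b) ∧
  (if A.isRight q then RVd A w f r β i = q :: LVd A r β i
   else LVd A r β (i + 1) = q :: RVd A w f r β (i + 1))

variable {A} {w}

lemma sectionAt_cons (x p : Q × ℕ) (ρ : List (Q × ℕ)) (j : ℕ) :
    sectionAt A w (x :: p :: ρ) j =
      (if A.readIdx x = j then [(x.1, p.1)] else []) ++ sectionAt A w (p :: ρ) j := by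
  rw [sectionAt, sectionAt]
  rw [show (x :: p :: ρ).zip (x :: p :: ρ).tail = (x, p) :: ((p :: ρ).zip (p :: ρ).tail) from rfl]
  rw [List.filterMap_cons]
  by_cases h : A.readIdx x = j <;> simp [h]

lemma lWord_nil_any (β : Bool) : lWord A β ([] : List (Q × Q)) = [] := by cases β <;> rfl
lemma rWord_nil_any (β : Bool) : rWord A β ([] : List (Q × Q)) = [] := by cases β <;> rfl

/-- The weave: from the invariant, construct the run. -/
lemma weave :
    ∀ (M : ℕ) (r : ℕ → List (Q × Q)) (β : ℕ → Bool) (q : Q) (i : ℕ) (f : Q),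
    (∑ j ∈ Finset.range (w.length + 2), (r j).length) = M →
    WInv A w r β q i f →
    ∃ ρ : List (Q × ℕ), ρ.head? = some (q, if A.isRight q then i else i + 1) ∧
      ρ.getLast? = some (f, w.length + 2) ∧ ρ.Chain' (A.step w) ∧
      ∀ j, sectionAt A w ρ j = r j := by
  intro M
  induction M using Nat.strong_induction_on with
  | _ M ih =>
  intro r β q i f hM hInv
  obtain ⟨hi, hf, hswf, hhigh, hgen0, hsp0⟩ := hInv
  by_cases hq : A.isRight q = true
  · -- ======================== q right-reading, head at (q, i) reading letter i
    have hgen : ∀ b, b ≤ w.length + 2 → b ≠ i → LVd A r β b = RVd A w f r β b := by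
      intro b hb hbne
      exact hgen0 b hb (by simp [hq]; exact hbne)
    have hsp : lWord A (β i) (r i) = q :: LVd A r β i := by
      rw [if_pos hq] at hsp0
      rw [RVd, if_neg (by omega)] at hsp0
      exact hsp0
    have hne : r i ≠ [] := by
      intro hnil
      rw [hnil, lWord_nil_any] at hsp
      cases hsp
    have hβ : β i = true := by
      by_contra hc
      have hβ' : β i = false := by simpa using hc
      have hswfi := hswf i
      rw [hβ'] at hswfi hsp
      have := lWord_false_head (r i) hswfi q (by rw [hsp]; rfl)
      rw [this] at hq; simp at hq
    obtain ⟨t1, t2, cl, hri⟩ : ∃ t1 t2 cl, r i = (t1, t2) :: cl := by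
      cases hcl : r i with
      | nil => exact absurd hcl hne
      | cons t cl => exact ⟨t.1, t.2, cl, by simp [hcl]⟩
    have hswfi : SWF A (aAt w i) true ((t1, t2) :: cl) := by rw [← hβ, ← hri]; exact hswf i
    rw [hri, hβ, lWord_true_cons] at hsp
    have hcc := List.cons_eq_cons.mp hsp
    have ht1 : t1 = q := hcc.1
    have hLV : lWord A false cl = LVd A r β i := hcc.2
    have hstep : A.step w (q, i) (t2, i + 1) := by
      refine ⟨aAt w i, ?_, ?_, ?_⟩
      · have hrd : A.readIdx (q, i) = i := by simp [TwoWayFA.readIdx, hq]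
        rw [hrd]; exact readAt_lt w i hi
      · show A.trans q (aAt w i) t2
        rw [← ht1]; exact hswfi.tr (t1, t2) (by simp)
      · simp [hq]
    set r' : ℕ → List (Q × Q) := fun j => if j = i then cl else r j with hr'def
    set β' : ℕ → Bool := fun j => if j = i then false else β j with hβ'def
    have hr'i : r' i = cl := by simp [hr'def]
    have hβ'i : β' i = false := by simp [hβ'def]
    have hr'ne : ∀ j, j ≠ i → r' j = r j := fun j hj => by simp [hr'def, hj]
    have hβ'ne : ∀ j, j ≠ i → β' j = β j := fun j hj => by simp [hβ'def, hj]
    have hswf' : ∀ j, SWF A (aAt w j) (β' j) (r' j) := by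
      intro j
      by_cases hj : j = i
      · subst hj; rw [hr'i, hβ'i]
        have := hswfi.tail
        simpa using this
      · rw [hr'ne j hj, hβ'ne j hj]; exact hswf j
    have hhigh' : ∀ j, w.length + 2 ≤ j → r' j = [] := by
      intro j hj; rw [hr'ne j (by omega)]; exact hhigh j hj
    have hMpos : cl.length + 1 ≤ M := by
      rw [← hM]
      calc cl.length + 1 = (r i).length := by rw [hri]; simp
      _ ≤ _ := Finset.single_le_sum (f := fun j => (r j).length)
          (fun _ _ => Nat.zero_le _) (Finset.mem_range.mpr hi)
    have hM' : (∑ j ∈ Finset.range (w.length + 2), (r' j).length) = M - 1 := by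
      have h1 := (Finset.add_sum_erase (Finset.range (w.length+2))
        (fun j => (r j).length) (Finset.mem_range.mpr hi)).symm
      have h2 := (Finset.add_sum_erase (Finset.range (w.length+2))
        (fun j => (r' j).length) (Finset.mem_range.mpr hi)).symm
      have h3 : ∑ j ∈ (Finset.range (w.length+2)).erase i, (r' j).length
          = ∑ j ∈ (Finset.range (w.length+2)).erase i, (r j).length := by
        apply Finset.sum_congr rfl
        intro j hj
        rw [hr'ne j (Finset.ne_of_mem_erase hj)]
      rw [h2, h3, hr'i]
      rw [h1, hri] at hM
      simp only [List.length_cons] at hM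
      omega
    have hLV'eq : ∀ b, b ≠ i + 1 → LVd A r' β' b = LVd A r β b := by
      intro b hb
      cases b with
      | zero => rfl
      | succ b' => rw [LVd, LVd, hr'ne b' (by omega), hβ'ne b' (by omega)]
    have hRV'eq : ∀ b, b ≠ i → RVd A w f r' β' b = RVd A w f r β b := by
      intro b hb
      rw [RVd, RVd]
      by_cases hbn : b = w.length + 2
      · simp [hbn]
      · rw [if_neg hbn, if_neg hbn, hr'ne b hb, hβ'ne b hb]
    have hLV'i1 : LVd A r' β' (i+1) = rWord A false cl := by
      rw [LVd, hr'i, hβ'i]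
    by_cases hR2 : A.isRight t2 = true
    · -- target right-reading: move to letter i+1 (or terminate)
      rcases eq_or_ne (i+1) (w.length+2) with hterm | hterm
      · -- ==================== terminal case
        have hbn := hgen (w.length + 2) le_rfl (by omega)
        have hLVn : LVd A r β (w.length + 2) = [f] := by rw [hbn, RVd, if_pos rfl]
        rw [← hterm, LVd, hri, hβ,
          rWord_true_cons_of_right (t1, t2) cl hR2] at hLVn
        have hcc2 := List.cons_eq_cons.mp hLVn
        have htf : t2 = f := hcc2.1
        have hrwcl : rWord A false cl = [] := hcc2.2
        have hclnil : cl = [] := by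
          cases cl with
          | nil => rfl
          | cons t' cl' => rw [rWord_false_cons] at hrwcl; cases hrwcl
        have hLVi : LVd A r β i = [] := by
          rw [← hLV, hclnil, lWord_nil_any]
        have hempts : ∀ m, m ≤ i → LVd A r β (i - m) = [] := by
          intro m
          induction m with
          | zero => intro _; simpa using hLVi
          | succ m ihm =>
            intro hm1
            have hprev := ihm (by omega)
            have hb1 : i - m = (i - (m+1)) + 1 := by omega
            rw [hb1, LVd] at hprev
            have hrb : r (i - (m+1)) = [] := by
              by_contra hc
              exact rWord_ne (hswf _) hc hprev
            rcases Nat.eq_zero_or_pos (i - (m+1)) with h0 | h0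
            · rw [h0]; rfl
            · rw [hgen (i - (m+1)) (by omega) (by omega), RVd,
                if_neg (by omega), hrb, lWord_nil_any]
        have hrempty : ∀ j, j < i → r j = [] := by
          intro j hj
          have hem := hempts (i - (j+1)) (by omega)
          have he : i - (i - (j + 1)) = j + 1 := by omega
          rw [he, LVd] at hem
          by_contra hc
          exact rWord_ne (hswf j) hc hem
        refine ⟨[(q, i), (f, w.length + 2)], by simp [hq], by simp, ?_, ?_⟩
        · refine List.isChain_cons_cons.mpr ⟨?_, by simp⟩
          rw [← htf, ← hterm]
          exact hstep
        · intro j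
          rw [show ([(q, i), (f, w.length + 2)] : List (Q × ℕ))
              = (q,i) :: (f, w.length+2) :: [] from rfl, sectionAt_cons]
          have hsecnil : sectionAt A w [(f, w.length+2)] j = [] := by
            simp [sectionAt]
          rw [hsecnil]
          have hrd : A.readIdx (q, i) = i := by simp [TwoWayFA.readIdx, hq]
          rw [hrd]
          by_cases hj : i = j
          · subst hj
            rw [if_pos rfl, hri, hclnil]
            simp [← ht1, ← htf]
          · rw [if_neg hj]
            simp only [List.append_nil]
            rcases lt_trichotomy j i with h | h | h
            · exact (hrempty j h).symm
            · exact absurd h.symm hj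
            · exact (hhigh j (by omega)).symm
      · -- ==================== continue to the right
        have hWInv' : WInv A w r' β' t2 (i+1) f := by
          refine ⟨by omega, hf, hswf', hhigh', ?_, ?_⟩
          · intro b hb hbne
            rw [if_pos hR2] at hbne
            by_cases hbi : b = i
            · rw [hbi, hLV'eq i (by omega), RVd, if_neg (by omega), hr'i, hβ'i]
              exact hLV.symm
            · rw [hLV'eq b hbne, hRV'eq b hbi]
              exact hgen b hb hbi
          · rw [if_pos hR2]
            rw [hRV'eq (i+1) (by omega), hLV'i1]
            have hb := hgen (i+1) (by omega) (by omega)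
            rw [LVd, hri, hβ, rWord_true_cons_of_right (t1, t2) cl hR2] at hb
            exact hb.symm
        obtain ⟨ρ', hhead', hlast', hchain', hsec'⟩ :=
          ih (M-1) (by omega) r' β' t2 (i+1) f (by omega) hWInv'
        rw [if_pos hR2] at hhead'
        obtain ⟨p, ρ'', rfl⟩ : ∃ p ρ'', ρ' = p :: ρ'' := by
          cases ρ' with
          | nil => simp at hhead'
          | cons p ρ'' => exact ⟨p, ρ'', rfl⟩
        have hp : p = (t2, i+1) := by simpa using hhead'
        refine ⟨(q, i) :: p :: ρ'', by simp [hq], ?_, ?_, ?_⟩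
        · rw [List.getLast?_cons_cons]; exact hlast'
        · exact List.isChain_cons_cons.mpr ⟨by rw [hp]; exact hstep, hchain'⟩
        · intro j
          rw [sectionAt_cons, hsec' j]
          have hrd : A.readIdx (q, i) = i := by simp [TwoWayFA.readIdx, hq]
          rw [hrd]
          by_cases hj : i = j
          · subst hj
            rw [if_pos rfl, hr'i, hri, hp]
            simp [← ht1]
          · rw [if_neg hj, hr'ne j (by omega)]
            simp
    · -- target left-reading: bounce, stay at letter i
      have hR2' : A.isRight t2 = false := by simpa using hR2
      obtain ⟨t'1, t'2, cl'', hcl2⟩ : ∃ t'1 t'2 cl'', cl = (t'1, t'2) :: cl'' := by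
        cases hcl : cl with
        | nil =>
          exfalso
          have h2 := (hswfi.lastR (by simp)).2
          rw [hcl] at h2
          simp [List.getLast] at h2
          rw [h2] at hR2'; exact Bool.noConfusion hR2'
        | cons t' cl' => exact ⟨t'.1, t'.2, cl', by simp [hcl]⟩
      have ht'1 : t'1 = t2 := by
        have hc := List.isChain_cons_cons.mp (hcl2 ▸ hswfi.bounce)
        have hha : A.isRight t1 = true := hswfi.head_alt
        exact hc.1 (by
          show A.isRight t2 ≠ A.isRight t1
          rw [hR2', hha]; simp)
      have hWInv' : WInv A w r' β' t2 i f := by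
        refine ⟨hi, hf, hswf', hhigh', ?_, ?_⟩
        · intro b hb hbne
          rw [if_neg (by rw [hR2']; simp)] at hbne
          by_cases hbi : b = i
          · rw [hbi, hLV'eq i (by omega), RVd, if_neg (by omega), hr'i, hβ'i]
            exact hLV.symm
          · rw [hLV'eq b hbne, hRV'eq b hbi]
            exact hgen b hb hbi
        · rw [if_neg (by rw [hR2']; simp)]
          rw [hLV'i1, hRV'eq (i+1) (by omega)]
          have hb := hgen (i+1) (by omega) (by omega)
          rw [LVd, hri, hβ] at hb
          rw [hcl2] at hb ⊢
          rw [← hb]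
          have := rWord_false_eq_cons (t1, t2) (t'1, t'2) cl'' hR2' (by simpa using ht'1)
          simpa using this
      obtain ⟨ρ', hhead', hlast', hchain', hsec'⟩ :=
        ih (M-1) (by omega) r' β' t2 i f (by omega) hWInv'
      rw [if_neg (by rw [hR2']; simp)] at hhead'
      obtain ⟨p, ρ'', rfl⟩ : ∃ p ρ'', ρ' = p :: ρ'' := by
        cases ρ' with
        | nil => simp at hhead'
        | cons p ρ'' => exact ⟨p, ρ'', rfl⟩
      have hp : p = (t2, i+1) := by simpa using hhead'
      refine ⟨(q, i) :: p :: ρ'', by simp [hq], ?_, ?_, ?_⟩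
      · rw [List.getLast?_cons_cons]; exact hlast'
      · exact List.isChain_cons_cons.mpr ⟨by rw [hp]; exact hstep, hchain'⟩
      · intro j
        rw [sectionAt_cons, hsec' j]
        have hrd : A.readIdx (q, i) = i := by simp [TwoWayFA.readIdx, hq]
        rw [hrd]
        by_cases hj : i = j
        · subst hj
          rw [if_pos rfl, hr'i, hri, hp]
          simp [← ht1]
        · rw [if_neg hj, hr'ne j (by omega)]
          simp
  · -- ======================== q left-reading, head at (q, i+1) reading letter i
    have hq' : A.isRight q = false := by simpa using hq
    have hgen : ∀ b, b ≤ w.length + 2 → b ≠ i + 1 → LVd A r β b = RVd A w f r β b := by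
      intro b hb hbne
      exact hgen0 b hb (by simp [hq']; exact hbne)
    have hsp : rWord A (β i) (r i) = q :: RVd A w f r β (i+1) := by
      rw [if_neg (by rw [hq']; simp)] at hsp0
      rw [LVd] at hsp0
      exact hsp0
    have hne : r i ≠ [] := by
      intro hnil
      rw [hnil, rWord_nil_any] at hsp
      cases hsp
    have hβ : β i = false := by
      by_contra hc
      have hβ' : β i = true := by simpa using hc
      have hswfi := hswf i
      rw [hβ'] at hswfi hsp
      have := rWord_true_head (r i) hswfi q (by rw [hsp]; rfl)
      rw [this] at hq'; exact Bool.noConfusion hq'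
    obtain ⟨t1, t2, cl, hri⟩ : ∃ t1 t2 cl, r i = (t1, t2) :: cl := by
      cases hcl : r i with
      | nil => exact absurd hcl hne
      | cons t cl => exact ⟨t.1, t.2, cl, by simp [hcl]⟩
    have hswfi : SWF A (aAt w i) false ((t1, t2) :: cl) := by rw [← hβ, ← hri]; exact hswf i
    rw [hri, hβ, rWord_false_cons] at hsp
    have hcc := List.cons_eq_cons.mp hsp
    have ht1 : t1 = q := hcc.1
    have hRV : rWord A true cl = RVd A w f r β (i+1) := hcc.2
    have hstep : A.step w (q, i+1) (t2, i) := by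
      refine ⟨aAt w i, ?_, ?_, ?_⟩
      · have hrd : A.readIdx (q, i+1) = i := by simp [TwoWayFA.readIdx, hq']
        rw [hrd]; exact readAt_lt w i hi
      · show A.trans q (aAt w i) t2
        rw [← ht1]; exact hswfi.tr (t1, t2) (by simp)
      · simp [hq']
    set r' : ℕ → List (Q × Q) := fun j => if j = i then cl else r j with hr'def
    set β' : ℕ → Bool := fun j => if j = i then true else β j with hβ'def
    have hr'i : r' i = cl := by simp [hr'def]
    have hβ'i : β' i = true := by simp [hβ'def]
    have hr'ne : ∀ j, j ≠ i → r' j = r j := fun j hj => by simp [hr'def, hj]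
    have hβ'ne : ∀ j, j ≠ i → β' j = β j := fun j hj => by simp [hβ'def, hj]
    have hswf' : ∀ j, SWF A (aAt w j) (β' j) (r' j) := by
      intro j
      by_cases hj : j = i
      · subst hj; rw [hr'i, hβ'i]
        have := hswfi.tail
        simpa using this
      · rw [hr'ne j hj, hβ'ne j hj]; exact hswf j
    have hhigh' : ∀ j, w.length + 2 ≤ j → r' j = [] := by
      intro j hj; rw [hr'ne j (by omega)]; exact hhigh j hj
    have hMpos : cl.length + 1 ≤ M := by
      rw [← hM]
      calc cl.length + 1 = (r i).length := by rw [hri]; simp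
      _ ≤ _ := Finset.single_le_sum (f := fun j => (r j).length)
          (fun _ _ => Nat.zero_le _) (Finset.mem_range.mpr hi)
    have hM' : (∑ j ∈ Finset.range (w.length + 2), (r' j).length) = M - 1 := by
      have h1 := (Finset.add_sum_erase (Finset.range (w.length+2))
        (fun j => (r j).length) (Finset.mem_range.mpr hi)).symm
      have h2 := (Finset.add_sum_erase (Finset.range (w.length+2))
        (fun j => (r' j).length) (Finset.mem_range.mpr hi)).symm
      have h3 : ∑ j ∈ (Finset.range (w.length+2)).erase i, (r' j).length
          = ∑ j ∈ (Finset.range (w.length+2)).erase i, (r j).length := by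
        apply Finset.sum_congr rfl
        intro j hj
        rw [hr'ne j (Finset.ne_of_mem_erase hj)]
      rw [h2, h3, hr'i]
      rw [h1, hri] at hM
      simp only [List.length_cons] at hM
      omega
    have hLV'eq : ∀ b, b ≠ i + 1 → LVd A r' β' b = LVd A r β b := by
      intro b hb
      cases b with
      | zero => rfl
      | succ b' => rw [LVd, LVd, hr'ne b' (by omega), hβ'ne b' (by omega)]
    have hRV'eq : ∀ b, b ≠ i → RVd A w f r' β' b = RVd A w f r β b := by
      intro b hb
      rw [RVd, RVd]
      by_cases hbn : b = w.length + 2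
      · simp [hbn]
      · rw [if_neg hbn, if_neg hbn, hr'ne b hb, hβ'ne b hb]
    have hLV'i1 : LVd A r' β' (i+1) = rWord A true cl := by
      rw [LVd, hr'i, hβ'i]
    have hRVdi : RVd A w f r β i = lWord A false ((t1, t2) :: cl) := by
      rw [RVd, if_neg (by omega), hri, hβ]
    by_cases hR2 : A.isRight t2 = true
    · -- (d) target right-reading: turn around, read letter i from the left
      obtain ⟨t'1, t'2, cl'', hcl2⟩ : ∃ t'1 t'2 cl'', cl = (t'1, t'2) :: cl'' := by
        cases hcl : cl with
        | nil =>
          exfalso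
          have h2 := (hswfi.lastR (by simp)).1
          rw [hcl] at h2
          simp [List.getLast] at h2
          rw [ht1, hq'] at h2; exact Bool.noConfusion h2
        | cons t' cl' => exact ⟨t'.1, t'.2, cl', by simp [hcl]⟩
      have ht'1 : t'1 = t2 := by
        have hc := List.isChain_cons_cons.mp (hcl2 ▸ hswfi.bounce)
        have hha : A.isRight t1 = false := hswfi.head_alt
        exact hc.1 (by
          show A.isRight t2 ≠ A.isRight t1
          rw [hR2, hha]; simp)
      have hWInv' : WInv A w r' β' t2 i f := by
        refine ⟨hi, hf, hswf', hhigh', ?_, ?_⟩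
        · intro b hb hbne
          rw [if_pos hR2] at hbne
          by_cases hbi : b = i + 1
          · rw [hbi, hLV'i1, hRV'eq (i+1) (by omega)]
            exact hRV
          · rw [hLV'eq b hbi, hRV'eq b hbne]
            exact hgen b hb hbi
        · rw [if_pos hR2]
          rw [RVd, if_neg (by omega), hr'i, hβ'i, hLV'eq i (by omega)]
          rw [hgen i (by omega) (by omega), hRVdi, hcl2]
          have := lWord_true_eq_cons (t1, t2) (t'1, t'2) cl'' hR2 (by simpa using ht'1)
          simpa using this
      obtain ⟨ρ', hhead', hlast', hchain', hsec'⟩ :=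
        ih (M-1) (by omega) r' β' t2 i f (by omega) hWInv'
      rw [if_pos hR2] at hhead'
      obtain ⟨p, ρ'', rfl⟩ : ∃ p ρ'', ρ' = p :: ρ'' := by
        cases ρ' with
        | nil => simp at hhead'
        | cons p ρ'' => exact ⟨p, ρ'', rfl⟩
      have hp : p = (t2, i) := by simpa using hhead'
      refine ⟨(q, i+1) :: p :: ρ'', by simp [hq'], ?_, ?_, ?_⟩
      · rw [List.getLast?_cons_cons]; exact hlast'
      · exact List.isChain_cons_cons.mpr ⟨by rw [hp]; exact hstep, hchain'⟩
      · intro j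
        rw [sectionAt_cons, hsec' j]
        have hrd : A.readIdx (q, i+1) = i := by simp [TwoWayFA.readIdx, hq']
        rw [hrd]
        by_cases hj : i = j
        · subst hj
          rw [if_pos rfl, hr'i, hri, hp]
          simp [← ht1]
        · rw [if_neg hj, hr'ne j (by omega)]
          simp
    · -- (c) target left-reading: continue to the left
      have hR2' : A.isRight t2 = false := by simpa using hR2
      rcases Nat.eq_zero_or_pos i with hi0 | hi0
      · exfalso
        subst hi0
        have hb0 := hgen 0 (by omega) (by omega)
        rw [show LVd A r β 0 = [] from rfl, RVd, if_neg (by omega), hri, hβ,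
          lWord_false_cons_of_left (t1, t2) cl (by simpa using hR2')] at hb0
        cases hb0
      have hi1 : i - 1 + 1 = i := by omega
      have hWInv' : WInv A w r' β' t2 (i-1) f := by
        refine ⟨by omega, hf, hswf', hhigh', ?_, ?_⟩
        · intro b hb hbne
          rw [if_neg (by rw [hR2']; simp), hi1] at hbne
          by_cases hbi : b = i + 1
          · rw [hbi, hLV'i1, hRV'eq (i+1) (by omega)]
            exact hRV
          · rw [hLV'eq b hbi, hRV'eq b hbne]
            exact hgen b hb hbi
        · rw [if_neg (by rw [hR2']; simp), hi1]
          rw [hLV'eq i (by omega), RVd, if_neg (by omega), hr'i, hβ'i]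
          rw [hgen i (by omega) (by omega), hRVdi]
          have := lWord_false_cons_of_left (t1, t2) cl (by simpa using hR2')
          simpa using this
      obtain ⟨ρ', hhead', hlast', hchain', hsec'⟩ :=
        ih (M-1) (by omega) r' β' t2 (i-1) f (by omega) hWInv'
      rw [if_neg (by rw [hR2']; simp), hi1] at hhead'
      obtain ⟨p, ρ'', rfl⟩ : ∃ p ρ'', ρ' = p :: ρ'' := by
        cases ρ' with
        | nil => simp at hhead'
        | cons p ρ'' => exact ⟨p, ρ'', rfl⟩
      have hp : p = (t2, i) := by simpa using hhead'
      refine ⟨(q, i+1) :: p :: ρ'', by simp [hq'], ?_, ?_, ?_⟩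
      · rw [List.getLast?_cons_cons]; exact hlast'
      · exact List.isChain_cons_cons.mpr ⟨by rw [hp]; exact hstep, hchain'⟩
      · intro j
        rw [sectionAt_cons, hsec' j]
        have hrd : A.readIdx (q, i+1) = i := by simp [TwoWayFA.readIdx, hq']
        rw [hrd]
        by_cases hj : i = j
        · subst hj
          rw [if_pos rfl, hr'i, hri, hp]
          simp [← ht1]
        · rw [if_neg hj, hr'ne j (by omega)]
          simp

/-! ### Run value decomposition -/

lemma secVal_cons {d : ℕ} (lam : Q → (σ ⊕ Bool) → Q → (Fin d → ℤ)) (a : σ ⊕ Bool)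
    (t : Q × Q) (l : List (Q × Q)) :
    secVal lam a (t :: l) = lam t.1 a t.2 + secVal lam a l := by
  simp [secVal]

lemma runVal_eq_sum {d : ℕ} (A : TwoWayFA σ Q) (w : List σ)
    (lam : Q → (σ ⊕ Bool) → Q → (Fin d → ℤ)) (ρ : List (Q × ℕ)) :
    runVal A lam w ρ =
      ∑ i ∈ Finset.range (w.length + 2), secVal lam (aAt w i) (sectionAt A w ρ i) := by
  rw [runVal]
  simp only [sectionAt]
  generalize (ρ.zip ρ.tail) = L
  induction L with
  | nil => simp [secVal]
  | cons cc L' ihL =>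
    rw [List.map_cons, List.sum_cons, ihL]
    have hterm : ∀ i, secVal lam (aAt w i)
        ((cc :: L').filterMap fun cc => if A.readIdx cc.1 = i then some (cc.1.1, cc.2.1) else none)
        = (if A.readIdx cc.1 = i then lam cc.1.1 (aAt w i) cc.2.1 else 0)
          + secVal lam (aAt w i)
            (L'.filterMap fun cc => if A.readIdx cc.1 = i then some (cc.1.1, cc.2.1) else none) := by
      intro i
      rw [List.filterMap_cons]
      by_cases h : A.readIdx cc.1 = i
      · rw [if_pos h, if_pos h, secVal_cons]
      · rw [if_neg h, if_neg h, zero_add]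
    rw [Finset.sum_congr rfl (fun i _ => hterm i), Finset.sum_add_distrib]
    congr 1
    rcases lt_or_ge (A.readIdx cc.1) (w.length + 2) with hlt | hge
    · rw [Finset.sum_ite_eq (Finset.range (w.length + 2)) (A.readIdx cc.1)
        (fun i => lam cc.1.1 (aAt w i) cc.2.1), if_pos (Finset.mem_range.mpr hlt)]
      unfold stepWeight
      rw [readAt_lt w _ hlt]
    · rw [Finset.sum_ite_eq (Finset.range (w.length + 2)) (A.readIdx cc.1)
        (fun i => lam cc.1.1 (aAt w i) cc.2.1), if_neg (by simp; omega)]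
      unfold stepWeight
      rw [readAt_ge w _ hge]

/-! ### Alternation from adjacent-difference chains -/

lemma alt_of_chain :
    ∀ (cl : List (Q × Q)) (v : Bool),
    (∀ t, cl.head? = some t → A.isRight t.1 = v) →
    cl.Chain' (fun t t' => A.isRight t.1 ≠ A.isRight t'.1) →
    ∀ (k : ℕ) (t : Q × Q), cl[k]? = some t → A.isRight t.1 = (v == decide (k % 2 = 0)) := by
  intro cl
  induction cl with
  | nil => intro v _ _ k t ht; simp at ht
  | cons x cl' ihc =>
    intro v hhead hch k t ht
    match k with
    | 0 =>
      simp only [List.getElem?_cons_zero, Option.some.injEq] at ht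
      rw [← ht]
      simpa using hhead x rfl
    | (k'+1) =>
      have hhead' : ∀ t', cl'.head? = some t' → A.isRight t'.1 = !v := by
        intro t' ht'
        cases cl' with
        | nil => simp at ht'
        | cons y cl'' =>
          simp only [List.head?_cons, Option.some.injEq] at ht'
          rw [← ht']
          have hrel := (List.isChain_cons_cons.mp hch).1
          have hx := hhead x rfl
          cases hv : A.isRight y.1 <;> cases v <;> simp_all
      have := ihc (!v) hhead' hch.tail k' t (by simpa using ht)
      rcases Nat.even_or_odd k' with he | he
      · have h0 : k' % 2 = 0 := Nat.even_iff.mp he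
        have h1 : (k' + 1) % 2 = 1 := by omega
        rw [h0] at this; rw [h1]
        cases v <;> simpa using this
      · have h0 : k' % 2 = 1 := Nat.odd_iff.mp he
        have h1 : (k' + 1) % 2 = 0 := by omega
        rw [h0] at this; rw [h1]
        cases v <;> simpa using this

lemma LVd_succ (r : ℕ → List (Q × Q)) (β : ℕ → Bool) (b : ℕ) :
    LVd A r β (b + 1) = rWord A (β b) (r b) := rfl

end Aux

/-- merging lemma. If `s = c₁,…,c_n` is a sequence of crossing
sections for the letters of ⊢w⊣, with `c₁` initial, `c_n` accepting, and consecutive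
sections matching, then there is an accepting two-way run `ρ` over `w` whose crossing
section sequence is exactly `s`, and `V(ρ) = Σᵢ V(cᵢ)`. -/
theorem crossing_sections_merge {σ Q : Type} [DecidableEq Q] (A : TwoWayFA σ Q)
    {d : ℕ} (lam : Q → (σ ⊕ Bool) → Q → (Fin d → ℤ)) (k : ℕ) (w : List σ)
    (s : List (List (Q × Q)))
    (hlen : s.length = w.length + 2)
    (hcs : ∀ i < s.length,
      IsCrossSection A k ((extWord w).getD i (Sum.inr true)) (s.getD i []))
    (hinit : ∃ c, s.head? = some c ∧ InitialCS A c)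
    (hacc : ∃ c, s.getLast? = some c ∧ AcceptingCS A c)
    (hmatch : s.Chain' (MatchCS A)) :
    ∃ ρ, A.IsAccRun w ρ ∧ crossSeq A w ρ = s ∧
      runVal A lam w ρ =
        ∑ i ∈ Finset.range s.length,
          secVal lam ((extWord w).getD i (Sum.inr true)) (s.getD i []) := by
  classical
  obtain ⟨c₀, hc0head, q₀, hq0init, hLA⟩ := hinit
  obtain ⟨cn, hcnlast, f, hfacc, hRA⟩ := hacc
  set r : ℕ → List (Q × Q) := fun j => s.getD j [] with hrdef
  have hsne : s ≠ [] := by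
    intro h; rw [h] at hlen; simp at hlen
  have hc0 : c₀ = r 0 := by
    cases s with
    | nil => exact absurd rfl hsne
    | cons a l =>
      simp only [List.head?_cons, Option.some.injEq] at hc0head
      simp [hrdef, ← hc0head]
  have hcn : cn = r (w.length + 1) := by
    rw [List.getLast?_eq_getElem?] at hcnlast
    have h1 : s.length - 1 = w.length + 1 := by omega
    rw [h1] at hcnlast
    simp only [hrdef]
    rw [List.getD_eq_getElem?_getD, hcnlast]
    rfl
  rw [hc0] at hLA
  rw [hcn] at hRA
  have hrget : ∀ j, j < w.length + 2 → ∃ h : j < s.length, r j = s.get ⟨j, h⟩ := by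
    intro j hj
    refine ⟨by omega, ?_⟩
    simp only [hrdef]
    rw [List.getD_eq_getElem?_getD, List.getElem?_eq_getElem (by omega)]
    rfl
  have hmatchb : ∀ b, b + 1 < w.length + 2 → RAnch A (r b) = LAnch A (r (b+1)) := by
    intro b hb
    obtain ⟨h1, e1⟩ := hrget b (by omega)
    obtain ⟨h2, e2⟩ := hrget (b+1) hb
    rw [e1, e2]
    exact List.isChain_iff_getElem.mp hmatch b (by omega)
  have hcs' : ∀ j, j < w.length + 2 → IsCrossSection A k (aAt w j) (r j) := by
    intro j hj
    exact hcs j (by omega)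
  have halt : ∀ j, j < w.length + 2 → ∀ (kk : ℕ) (t : Q × Q), (r j)[kk]? = some t →
      A.isRight t.1 = (true == decide (kk % 2 = 0)) := by
    intro j hj
    obtain ⟨hne, hlenk, htr, ⟨th, hth, hthR⟩, ⟨tl, htl, htlR⟩, hch⟩ := hcs' j hj
    apply alt_of_chain (r j) true ?_ hch
    intro t ht
    rw [hth] at ht
    simp only [Option.some.injEq] at ht
    rw [← ht]; exact hthR
  have hodd : ∀ j, j < w.length + 2 → (r j).length % 2 = 1 := by
    intro j
    induction j with
    | zero =>
      intro h0
      have hl : (lWord A true (r 0)).length % 2 = (r 0).length % 2 :=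
        lWord_true_length_parity (r 0)
      rw [← LAnch_eq_lWord, hLA] at hl
      simpa using hl.symm
    | succ j ihj =>
      intro hj
      have h1 := hmatchb j hj
      have h2 := rWord_true_length_parity (A := A) (r j)
      have h3 := lWord_true_length_parity (A := A) (r (j+1))
      rw [← RAnch_eq_rWord] at h2
      rw [← LAnch_eq_lWord] at h3
      have h4 := ihj (by omega)
      rw [h1] at h2
      omega
  have hbounce : ∀ j, j < w.length + 2 →
      (r j).Chain' (fun t t' => A.isRight t.2 ≠ A.isRight t.1 → t'.1 = t.2) := by
    intro j hj
    refine List.isChain_iff_getElem.mpr ?_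
    intro m hm hdir
    have hmlt : m < (r j).length := by omega
    have hm1lt : m + 1 < (r j).length := by omega
    have hum : (r j)[m]? = some ((r j).get ⟨m, hmlt⟩) := by
      rw [List.getElem?_eq_getElem hmlt]; simp
    have hum' : (r j)[m+1]? = some ((r j).get ⟨m+1, hm1lt⟩) := by
      rw [List.getElem?_eq_getElem hm1lt]; simp
    set u := (r j).get ⟨m, hmlt⟩ with hudef
    set u' := (r j).get ⟨m+1, hm1lt⟩ with hu'def
    have hu1 := halt j hj m u hum
    by_contra hne
    rcases Nat.even_or_odd m with hme | hmo
    · -- right-boundary pair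
      have h0 : m % 2 = 0 := Nat.even_iff.mp hme
      rw [h0] at hu1
      have hu1' : A.isRight u.1 = true := by simpa using hu1
      have hu2 : A.isRight u.2 = false := by
        cases hv : A.isRight u.2
        · rfl
        · exact absurd (show A.isRight u.2 = A.isRight u.1 by rw [hv, hu1']) hdir
      have hs1 : (sSeqR (r j))[m]? = some u.2 := by
        rw [sSeqR_get?, hum]; simp [h0]
      have hs2 : (sSeqR (r j))[m+1]? = some u'.1 := by
        rw [sSeqR_get?, hum']
        have hpp : (m+1) % 2 = 1 := by omega
        simp [hpp]
      have hgood : goodR A u.2 u'.1 = false := by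
        have hd : decide (u.2 = u'.1) = false := decide_eq_false (fun h => hne h.symm)
        simp [goodR, hd]
      obtain ⟨kk, hkke, hk1, hk2⟩ := chunkReduce_keep (goodR A) (sSeqR (r j)) (m/2) u.2 u'.1
        (by rw [show 2 * (m/2) = m by omega]; exact hs1)
        (by rw [show 2 * (m/2) + 1 = m + 1 by omega]; exact hs2)
        hgood
      have hkRA : (RAnch A (r j))[kk]? = some u.2 := by
        rw [RAnch_eq_rWord, rWord_true_eq]; exact hk1
      have hkRA2 : (RAnch A (r j))[kk+1]? = some u'.1 := by
        rw [RAnch_eq_rWord, rWord_true_eq]; exact hk2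
      rcases eq_or_ne (j+1) (w.length + 2) with hj1 | hj1
      · have hrw : r (w.length + 1) = r j := by rw [show w.length + 1 = j by omega]
        rw [← hrw, hRA] at hkRA2
        simp at hkRA2
      · have heq := hmatchb j (by omega)
        rw [heq, LAnch_eq_lWord] at hkRA
        have := lWord_true_even (r (j+1)) (halt (j+1) (by omega)) kk u.2 hkRA hkke
        rw [this] at hu2; exact Bool.noConfusion hu2
    · -- left-boundary pair
      have h0 : m % 2 = 1 := Nat.odd_iff.mp hmo
      rw [h0] at hu1
      have hu1' : A.isRight u.1 = false := by simpa using hu1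
      have hu2 : A.isRight u.2 = true := by
        cases hv : A.isRight u.2
        · exact absurd (show A.isRight u.2 = A.isRight u.1 by rw [hv, hu1']) hdir
        · rfl
      obtain ⟨x, cl, hrj⟩ : ∃ x cl, r j = x :: cl := by
        cases hrr : r j with
        | nil => rw [hrr] at hmlt; simp at hmlt
        | cons x cl => exact ⟨x, cl, rfl⟩
      have hclm : cl[m-1]? = some u := by
        have h := hum
        rw [hrj, show m = (m-1) + 1 by omega] at h
        simpa using h
      have hclm' : cl[m]? = some u' := by
        have h := hum'
        rw [hrj] at h
        simpa using h
      have hs1 : (sSeqR cl)[m-1]? = some u.2 := by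
        rw [sSeqR_get?, hclm]
        have hpp : (m-1) % 2 = 0 := by omega
        simp [hpp]
      have hs2 : (sSeqR cl)[m]? = some u'.1 := by
        rw [sSeqR_get?, hclm']
        simp [h0]
      have hgood : goodL A u.2 u'.1 = false := by
        have hd : decide (u.2 = u'.1) = false := decide_eq_false (fun h => hne h.symm)
        simp [goodL, hd]
      obtain ⟨kk, hkke, hk1, hk2⟩ := chunkReduce_keep (goodL A) (sSeqR cl) ((m-1)/2) u.2 u'.1
        (by rw [show 2 * ((m-1)/2) = m - 1 by omega]; exact hs1)
        (by rw [show 2 * ((m-1)/2) + 1 = m by omega]; exact hs2)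
        hgood
      have hkLA : (LAnch A (r j))[kk+1]? = some u.2 := by
        rw [LAnch_eq_lWord, hrj, lWord_true_cons, List.getElem?_cons_succ, lWord_false_eq]
        exact hk1
      rcases Nat.eq_zero_or_pos j with hj0 | hj0
      · rw [hj0, hLA] at hkLA
        simp at hkLA
      · have heq := hmatchb (j-1) (by omega)
        rw [show j - 1 + 1 = j by omega] at heq
        rw [← heq, RAnch_eq_rWord] at hkLA
        have := rWord_true_odd (r (j-1)) (halt (j-1) (by omega)) (kk+1) u.2 hkLA (by omega)
        rw [this] at hu2; exact Bool.noConfusion hu2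
  have hswfI : ∀ j, SWF A (aAt w j) true (r j) := by
    intro j
    rcases lt_or_ge j (w.length + 2) with hj | hj
    · obtain ⟨hne, hlenk, htr, ⟨th, hth, hthR⟩, ⟨tl, htl, htlR⟩, hch⟩ := hcs' j hj
      refine ⟨htr, halt j hj, ?_, hbounce j hj⟩
      intro hne'
      constructor
      · have hlt : (r j).length - 1 < (r j).length := by
          have := hodd j hj; omega
        have hget : (r j)[(r j).length - 1]? = some ((r j).getLast hne') := by
          rw [List.getLast_eq_getElem, List.getElem?_eq_getElem hlt]
        have halt1 := halt j hj _ _ hget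
        have hpar : ((r j).length - 1) % 2 = 0 := by
          have := hodd j hj; omega
        rw [hpar] at halt1
        simpa using halt1
      · rw [List.getLast?_eq_getLast hne'] at htl
        simp only [Option.some.injEq] at htl
        rw [htl]; exact htlR
    · have hrj : r j = [] := by
        simp only [hrdef]
        exact List.getD_eq_default _ _ (by omega)
      rw [hrj]
      exact ⟨by simp, by simp, fun h => absurd rfl h, List.isChain_nil⟩
  obtain ⟨x0, cl0, hr0⟩ : ∃ x cl, r 0 = x :: cl := by
    have hne0 := (hcs' 0 (by omega)).1
    cases hrr : r 0 with
    | nil => exact absurd hrr hne0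
    | cons x cl => exact ⟨x, cl, rfl⟩
  have hq0R : A.isRight q₀ = true := by
    have h1 : x0.1 = q₀ := by
      have hh := hLA
      rw [LAnch_eq_lWord, hr0, lWord_true_cons] at hh
      exact (List.cons_eq_cons.mp hh).1
    rw [← h1]
    have := halt 0 (by omega) 0 x0 (by rw [hr0]; simp)
    simpa using this
  have hWI : WInv A w r (fun _ => true) q₀ 0 f := by
    refine ⟨by omega, hfacc, hswfI, ?_, ?_, ?_⟩
    · intro j hj
      simp only [hrdef]
      exact List.getD_eq_default _ _ (by omega)
    · intro b hb hbne
      rw [if_pos hq0R] at hbne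
      obtain ⟨b', rfl⟩ : ∃ b', b = b' + 1 := ⟨b - 1, by omega⟩
      rw [LVd_succ]
      rcases eq_or_ne (b' + 1) (w.length + 2) with hbn | hbn
      · rw [RVd, if_pos hbn]
        have hb' : b' = w.length + 1 := by omega
        rw [hb', ← RAnch_eq_rWord, hRA]
      · rw [RVd, if_neg hbn, ← RAnch_eq_rWord, ← LAnch_eq_lWord]
        exact hmatchb b' (by omega)
    · rw [if_pos hq0R]
      rw [RVd, if_neg (by omega)]
      rw [← LAnch_eq_lWord, hLA]
      rfl
  obtain ⟨ρ, hhead, hlast, hchain, hsec⟩ :=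
    weave (∑ j ∈ Finset.range (w.length + 2), (r j).length) r (fun _ => true) q₀ 0 f rfl hWI
  refine ⟨ρ, ⟨⟨?_, hchain⟩, ⟨q₀, hq0init, ?_⟩, ⟨f, hfacc, hlast⟩⟩, ?_, ?_⟩
  · intro h; rw [h] at hhead; simp at hhead
  · rw [hhead, if_pos hq0R]
  · rw [crossSeq]
    apply List.ext_getElem?
    intro j
    rcases lt_or_ge j (w.length + 2) with hj | hj
    · rw [List.getElem?_map, List.getElem?_range hj]
      simp only [Option.map_some]
      rw [hsec j]
      simp only [hrdef]
      rw [List.getD_eq_getElem?_getD, List.getElem?_eq_getElem (by omega)]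
      rfl
    · rw [List.getElem?_map, List.getElem?_eq_none (by simpa using hj),
        List.getElem?_eq_none (by omega)]
      rfl
  · rw [runVal_eq_sum A w lam ρ, hlen]
    apply Finset.sum_congr rfl
    intro j hj
    rw [hsec j]
    simp only [hrdef]
    rfl
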